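/- Let K be a cap body of the unit ball in E^d with vertex set V and let v ∈ V. A unit vector u ∈ S^{d-1} illuminates v (i.e., there exists λ > 0 with v + λu ∈ int K) if and only if the closed spherical cap C_v = {p ∈ S^{d-1} : ⟨p, v⟩ ≥ 1} is contained in the open hemisphere Hem_{-u} = {x ∈ S^{d-1} : ⟨x, -u⟩ > 0}. -/

import Mathlib

open scoped RealInnerProductSpace

/-- For a cap body `K = conv(B ∪ V)` of the unit ball in `E^d` and a vertex
`v ∈ V`, a unit direction `u` illuminates `v` iff the closed spherical cap
`C_v = {p ∈ S^{d-1} : ⟪p, v⟫ ≥ 1}` is contained in the open hemisphere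
`Hem_{-u} = {x ∈ S^{d-1} : ⟪x, -u⟫ > 0}`. -/
theorem capBody_vertex_illuminated_iff_cap_in_hemisphere {d : ℕ} (hd : 2 ≤ d)
    (V : Set (EuclideanSpace ℝ (Fin d))) (hVfin : V.Finite)
    (hVout : ∀ v ∈ V, 1 < ‖v‖)
    (hVseg : ∀ v ∈ V, ∀ w ∈ V, v ≠ w →
      (segment ℝ v w ∩ Metric.closedBall (0 : EuclideanSpace ℝ (Fin d)) 1).Nonempty)
    (K : Set (EuclideanSpace ℝ (Fin d)))
    (hK : K = convexHull ℝ (Metric.closedBall (0 : EuclideanSpace ℝ (Fin d)) 1 ∪ V))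
    (v : EuclideanSpace ℝ (Fin d)) (hv : v ∈ V)
    (u : EuclideanSpace ℝ (Fin d)) (hu : ‖u‖ = 1) :
    (∃ l : ℝ, 0 < l ∧ v + l • u ∈ interior K) ↔
      {p : EuclideanSpace ℝ (Fin d) | ‖p‖ = 1 ∧ 1 ≤ ⟪p, v⟫} ⊆
        {x : EuclideanSpace ℝ (Fin d) | ‖x‖ = 1 ∧ 0 < ⟪x, -u⟫} := by
  subst hK
  have hvnorm := hVout v hv
  constructor
  · rintro ⟨l, hl, hmem⟩ p ⟨hp1, hpv⟩
    refine ⟨hp1, ?_⟩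
    have hconv : Convex ℝ {x : EuclideanSpace ℝ (Fin d) | ⟪p, x⟫ ≤ ⟪p, v⟫} :=
      convex_halfSpace_le ⟨fun a b => inner_add_right _ _ _,
        fun c a => real_inner_smul_right _ _ _⟩ _
    have hsub : Metric.closedBall (0 : EuclideanSpace ℝ (Fin d)) 1 ∪ V ⊆
        {x | ⟪p, x⟫ ≤ ⟪p, v⟫} := by
      rintro x (hx | hx)
      · have hx1 : ‖x‖ ≤ 1 := by simpa [dist_zero_right] using hx
        have h2 := real_inner_le_norm p x
        rw [hp1, one_mul] at h2
        exact le_trans (le_trans h2 hx1) hpv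
      · by_cases hxv : x = v
        · simp [hxv]
        · obtain ⟨z, hzseg, hzball⟩ := hVseg v hv x hx (fun h => hxv h.symm)
          obtain ⟨a, b, ha, hb, hab, rfl⟩ := hzseg
          have hz1 : ‖a • v + b • x‖ ≤ 1 := by simpa [dist_zero_right] using hzball
          have h1 : ⟪p, a • v + b • x⟫ ≤ 1 := by
            have h2 := real_inner_le_norm p (a • v + b • x)
            rw [hp1, one_mul] at h2
            exact le_trans h2 hz1
          rw [inner_add_right, real_inner_smul_right, real_inner_smul_right] at h1
          have hbpos : 0 < b := by
            rcases hb.lt_or_eq with h | h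
            · exact h
            · exfalso
              have ha1 : a = 1 := by linarith
              rw [← h, ha1] at hz1
              simp at hz1
              linarith
          have h3 : a * 1 ≤ a * ⟪p, v⟫ := mul_le_mul_of_nonneg_left hpv ha
          have h4 : b * ⟪p, x⟫ ≤ b * 1 := by linarith
          have h5 : ⟪p, x⟫ ≤ 1 := (mul_le_mul_iff_right₀ hbpos).mp h4
          show ⟪p, x⟫ ≤ ⟪p, v⟫
          linarith
    have hKsub := convexHull_min hsub hconv
    obtain ⟨ε, hε, hball⟩ := Metric.isOpen_iff.1 isOpen_interior _ hmem
    have hmem2 : v + l • u + (ε/2) • p ∈ {x : EuclideanSpace ℝ (Fin d) | ⟪p, x⟫ ≤ ⟪p, v⟫} := by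
      apply hKsub
      apply interior_subset
      apply hball
      rw [Metric.mem_ball, dist_eq_norm]
      have : v + l • u + (ε/2) • p - (v + l • u) = (ε/2) • p := by abel
      rw [this, norm_smul, hp1, mul_one, Real.norm_eq_abs, abs_of_pos (half_pos hε)]
      linarith
    simp only [Set.mem_setOf_eq, inner_add_right, real_inner_smul_right] at hmem2
    have hpp : ⟪p, p⟫ = 1 := by
      rw [real_inner_self_eq_norm_mul_norm, hp1]; ring
    rw [hpp] at hmem2
    rw [inner_neg_right]
    nlinarith
  · intro hsub
    have hvnpos : (0:ℝ) < ‖v‖ := by linarith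
    have hp0 : (‖v‖⁻¹ • v : EuclideanSpace ℝ (Fin d)) ∈
        {p : EuclideanSpace ℝ (Fin d) | ‖p‖ = 1 ∧ 1 ≤ ⟪p, v⟫} := by
      constructor
      · rw [norm_smul, norm_inv, norm_norm]
        field_simp
      · rw [real_inner_smul_left, real_inner_self_eq_norm_mul_norm]
        rw [inv_mul_eq_div, mul_div_assoc, div_self (ne_of_gt hvnpos), mul_one]
        linarith
    have hc := (hsub hp0).2
    rw [inner_neg_right, real_inner_smul_left] at hc
    have hvu : ⟪v, u⟫ < 0 := by
      by_contra h
      push_neg at h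
      have : 0 ≤ ‖v‖⁻¹ * ⟪v, u⟫ := mul_nonneg (by positivity) h
      linarith
    set μ := -⟪v, u⟫ with hμdef
    have hμpos : 0 < μ := by rw [hμdef]; linarith
    have huu : ⟪u, u⟫ = 1 := by
      rw [real_inner_self_eq_norm_mul_norm, hu]; ring
    have key : ∃ m : ℝ, 0 < m ∧ ‖v + m • u‖ < 1 := by
      by_contra h
      push_neg at h
      have hqu : ⟪v + μ • u, u⟫ = 0 := by
        rw [inner_add_left, real_inner_smul_left, huu, hμdef]
        ring
      set q : EuclideanSpace ℝ (Fin d) := v + μ • u with hqdef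
      have h1 : 1 ≤ ‖q‖ := h μ hμpos
      have hqnpos : (0:ℝ) < ‖q‖ := lt_of_lt_of_le one_pos h1
      have hqv : ⟪q, v⟫ = ‖q‖ * ‖q‖ := by
        have h2 : ⟪q, q⟫ = ⟪q, v⟫ + μ * ⟪q, u⟫ := by
          rw [hqdef, inner_add_right, real_inner_smul_right]
        rw [hqdef] at h2
        rw [hqu, mul_zero, add_zero] at h2
        rw [← hqdef] at h2
        rw [← h2, real_inner_self_eq_norm_mul_norm]
      have hp : (‖q‖⁻¹ • q : EuclideanSpace ℝ (Fin d)) ∈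
          {p : EuclideanSpace ℝ (Fin d) | ‖p‖ = 1 ∧ 1 ≤ ⟪p, v⟫} := by
        constructor
        · rw [norm_smul, norm_inv, norm_norm]
          field_simp
        · rw [real_inner_smul_left, hqv, inv_mul_eq_div, mul_div_assoc,
            div_self (ne_of_gt hqnpos), mul_one]
          exact h1
      have hcontra := (hsub hp).2
      rw [inner_neg_right, real_inner_smul_left, hqu] at hcontra
      simp at hcontra
    obtain ⟨m, hm, hb⟩ := key
    set b : EuclideanSpace ℝ (Fin d) := v + m • u with hbdef
    refine ⟨m / 2, by linarith, ?_⟩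
    have hr : (0:ℝ) < (1 - ‖b‖) / 2 := by linarith
    have hball : Metric.ball (v + (m/2) • u) ((1 - ‖b‖)/2) ⊆
        convexHull ℝ (Metric.closedBall (0 : EuclideanSpace ℝ (Fin d)) 1 ∪ V) := by
      intro y hy
      rw [Metric.mem_ball, dist_eq_norm] at hy
      set c : EuclideanSpace ℝ (Fin d) := (2:ℝ) • (y - (v + (m/2) • u)) + b with hcdef
      have hc1 : ‖c‖ ≤ 1 := by
        have h2 : ‖c‖ ≤ ‖(2:ℝ) • (y - (v + (m/2) • u))‖ + ‖b‖ := norm_add_le _ _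
        rw [norm_smul] at h2
        simp only [Real.norm_ofNat] at h2
        linarith
      have hcB : c ∈ Metric.closedBall (0 : EuclideanSpace ℝ (Fin d)) 1 := by
        simpa [dist_zero_right] using hc1
      have hy' : y = (1/2 : ℝ) • v + (1/2 : ℝ) • c := by
        rw [hcdef, hbdef]
        module
      rw [hy']
      have hseg : (1/2 : ℝ) • v + (1/2 : ℝ) • c ∈ segment ℝ v c :=
        ⟨1/2, 1/2, by norm_num, by norm_num, by norm_num, rfl⟩
      exact segment_subset_convexHull (𝕜 := ℝ)
        (s := Metric.closedBall (0 : EuclideanSpace ℝ (Fin d)) 1 ∪ V)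
        (Or.inr hv) (Or.inl hcB) hseg
    exact interior_maximal hball Metric.isOpen_ball (Metric.mem_ball_self hr)
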